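/- Let Y : Ω → ℝ^d be a random variable on a measurable space (Ω, 𝒢), 𝒬 a nonempty set of probability measures on Ω, and D ⊆ ℝ^d a vector subspace. Suppose there is α ∈ (0,1] such that for every h ∈ D there exists P_h ∈ 𝒬 with P_h(hY ≤ -α|h|) ≥ α. Then for every x ≥ 0, the set D_x := {h ∈ D : x + hY ≥ 0 𝒬-quasi-surely} is contained in the closed ball B(0, x/α), and D_x is a convex compact subset of ℝ^d. -/

import Mathlib

open Set MeasureTheory Metric Filter

/-- Under the quantitative no-arbitrage bound with constant `α ∈ (0,1]`,
for every `x ≥ 0` the set `D_x = {h ∈ D : x + h⬝Y ≥ 0 𝒬-q.s.}` is contained in the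
closed ball of radius `x/α` and is convex and compact. -/
theorem Dx_subset_ball_convex_compact
    {d : ℕ} {Ω : Type*} [MeasurableSpace Ω]
    (Y : Ω → EuclideanSpace ℝ (Fin d)) (hY : Measurable Y)
    (𝒬 : Set (Measure Ω)) (h𝒬ne : 𝒬.Nonempty)
    (h𝒬prob : ∀ P ∈ 𝒬, IsProbabilityMeasure P)
    (D : Submodule ℝ (EuclideanSpace ℝ (Fin d)))
    (α : ℝ) (hα0 : 0 < α) (hα1 : α ≤ 1)
    (hNA : ∀ h ∈ D, ∃ P ∈ 𝒬,
      ENNReal.ofReal α ≤ P {ω | (inner ℝ h (Y ω) : ℝ) ≤ -α * ‖h‖}) :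
    ∀ x : ℝ, 0 ≤ x →
      ({h : EuclideanSpace ℝ (Fin d) | h ∈ D ∧
          ∀ P ∈ 𝒬, P {ω | 0 ≤ x + (inner ℝ h (Y ω) : ℝ)} = 1} ⊆ closedBall 0 (x / α)) ∧
      Convex ℝ {h : EuclideanSpace ℝ (Fin d) | h ∈ D ∧
          ∀ P ∈ 𝒬, P {ω | 0 ≤ x + (inner ℝ h (Y ω) : ℝ)} = 1} ∧
      IsCompact {h : EuclideanSpace ℝ (Fin d) | h ∈ D ∧
          ∀ P ∈ 𝒬, P {ω | 0 ≤ x + (inner ℝ h (Y ω) : ℝ)} = 1} := by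
  intro x hx
  set S : Set (EuclideanSpace ℝ (Fin d)) :=
    {h : EuclideanSpace ℝ (Fin d) | h ∈ D ∧
      ∀ P ∈ 𝒬, P {ω | 0 ≤ x + (inner ℝ h (Y ω) : ℝ)} = 1} with hS
  have measA : ∀ h : EuclideanSpace ℝ (Fin d),
      MeasurableSet {ω | 0 ≤ x + (inner ℝ h (Y ω) : ℝ)} := fun h =>
    measurableSet_le measurable_const (measurable_const.add (measurable_const.inner hY))
  -- ball inclusion
  have hsub : S ⊆ closedBall 0 (x / α) := by
    intro h hh
    obtain ⟨hhD, hq⟩ := hh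
    obtain ⟨P, hP, hPα⟩ := hNA h hhD
    haveI := h𝒬prob P hP
    have hA : P {ω | 0 ≤ x + (inner ℝ h (Y ω) : ℝ)} = 1 := hq P hP
    have hAc : P {ω | 0 ≤ x + (inner ℝ h (Y ω) : ℝ)}ᶜ = 0 :=
      (prob_compl_eq_zero_iff (measA h)).2 hA
    have hne : ({ω | (inner ℝ h (Y ω) : ℝ) ≤ -α * ‖h‖} ∩
        {ω | 0 ≤ x + (inner ℝ h (Y ω) : ℝ)}).Nonempty := by
      by_contra hemp
      rw [Set.not_nonempty_iff_eq_empty, ← Set.disjoint_iff_inter_eq_empty] at hemp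
      have hsubc : {ω | (inner ℝ h (Y ω) : ℝ) ≤ -α * ‖h‖} ⊆
          {ω | 0 ≤ x + (inner ℝ h (Y ω) : ℝ)}ᶜ := hemp.subset_compl_right
      have := le_trans hPα (le_trans (measure_mono hsubc) hAc.le)
      simp only [nonpos_iff_eq_zero, ENNReal.ofReal_eq_zero] at this
      linarith
    obtain ⟨ω, hω1, hω2⟩ := hne
    simp only [Set.mem_setOf_eq] at hω1 hω2
    rw [mem_closedBall, dist_zero_right, le_div_iff₀ hα0]
    nlinarith
  refine ⟨hsub, ?_, ?_⟩
  · -- convexity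
    intro h₁ hh₁ h₂ hh₂ a b ha hb hab
    refine ⟨D.add_mem (D.smul_mem a hh₁.1) (D.smul_mem b hh₂.1), ?_⟩
    intro P hP
    haveI := h𝒬prob P hP
    have h1 := hh₁.2 P hP
    have h2 := hh₂.2 P hP
    have hinter : P ({ω | 0 ≤ x + (inner ℝ h₁ (Y ω) : ℝ)} ∩
        {ω | 0 ≤ x + (inner ℝ h₂ (Y ω) : ℝ)}) = 1 := by
      rw [measure_inter_conull ((prob_compl_eq_zero_iff (measA h₂)).2 h2)]
      exact h1
    have hsub2 : ({ω | 0 ≤ x + (inner ℝ h₁ (Y ω) : ℝ)} ∩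
        {ω | 0 ≤ x + (inner ℝ h₂ (Y ω) : ℝ)}) ⊆
        {ω | 0 ≤ x + (inner ℝ (a • h₁ + b • h₂) (Y ω) : ℝ)} := by
      intro ω ⟨hω1, hω2⟩
      simp only [Set.mem_setOf_eq] at *
      rw [inner_add_left, real_inner_smul_left, real_inner_smul_left]
      nlinarith
    refine le_antisymm prob_le_one ?_
    calc (1 : ENNReal) = _ := hinter.symm
      _ ≤ _ := measure_mono hsub2
  · -- compactness
    have hclosed : IsClosed S := by
      refine IsSeqClosed.isClosed ?_
      intro f h hf hlim
      constructor
      · exact D.closed_of_finiteDimensional.isSeqClosed (fun n => (hf n).1) hlim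
      · intro P hP
        haveI := h𝒬prob P hP
        set N : Set Ω := ⋂ n, {ω | 0 ≤ x + (inner ℝ (f n) (Y ω) : ℝ)} with hN
        have hNmeas : MeasurableSet N := MeasurableSet.iInter fun n => measA (f n)
        have hNone : P N = 1 := by
          rw [← prob_compl_eq_zero_iff hNmeas, hN, Set.compl_iInter]
          exact measure_iUnion_null fun n =>
            (prob_compl_eq_zero_iff (measA (f n))).2 ((hf n).2 P hP)
        have hNsub : N ⊆ {ω | 0 ≤ x + (inner ℝ h (Y ω) : ℝ)} := by
          intro ω hω
          simp only [hN, Set.mem_iInter, Set.mem_setOf_eq] at hω ⊢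
          have htend : Tendsto (fun n => x + (inner ℝ (f n) (Y ω) : ℝ)) atTop
              (nhds (x + (inner ℝ h (Y ω) : ℝ))) :=
            tendsto_const_nhds.add
              (((continuous_id.inner continuous_const).tendsto h).comp hlim)
          exact ge_of_tendsto' htend hω
        exact le_antisymm prob_le_one (hNone ▸ measure_mono hNsub)
    exact (isCompact_closedBall 0 (x / α)).of_isClosed_subset hclosed hsub
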